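/- Fix a client n in a finite set V. For each other client m and coordinate k ∈ {1,…,K}, let e_{m,n,k} ∈ {0,1} indicate whether the k-th parameter of client m's model reaches client n, with e_{n,n,k} = 1 for all k and ∑_{k=1}^K e_{m,n,k} = ⌊r_m K⌋ for m ≠ n, where r_m ∈ (0,1] is client m's model retention rate. Let p_m ≥ 0 be weights with ∑_m p_m = 1, and define the local aggregation coefficients p_{m,n,k} = p_m e_{m,n,k} / (∑_{m'} p_{m'} e_{m',n,k}) and deviations λ_{m,n,k} = p_{m,n,k} − p_m. Then ∑_{k=1}^K ∑_{m∈V} λ_{m,n,k}² ≤ ∑_{l∈V∖{n}} (K − ⌊r_l K⌋) p_l² + (∑_{l∈V∖{n}} (K − ⌊r_l K⌋))². -/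

import Mathlib

private lemma sq_sum_aux {ι : Type*} (s : Finset ι) (a : ι → ℝ)
    (ha : ∀ i ∈ s, 0 ≤ a i) : ∑ i ∈ s, (a i) ^ 2 ≤ (∑ i ∈ s, a i) ^ 2 := by
  calc ∑ i ∈ s, (a i) ^ 2 ≤ ∑ i ∈ s, a i * ∑ j ∈ s, a j := by
        refine Finset.sum_le_sum (fun i hi => ?_)
        have h1 : a i ≤ ∑ j ∈ s, a j := Finset.single_le_sum ha hi
        nlinarith [ha i hi]
    _ = (∑ i ∈ s, a i) ^ 2 := by rw [← Finset.sum_mul]; ring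

/-- Lemma 2: upper bound on the dominant part of the model aggregation bias. -/
theorem stmt_7 {V : Type*} [Fintype V] [DecidableEq V] (K : ℕ) (n : V)
    (e : V → Fin K → ℝ) (he01 : ∀ m k, e m k = 0 ∨ e m k = 1)
    (hen : ∀ k, e n k = 1)
    (r : V → ℝ) (hr : ∀ m, 0 < r m ∧ r m ≤ 1)
    (hcount : ∀ m, m ≠ n → ∑ k : Fin K, e m k = (⌊r m * K⌋ : ℝ))
    (p : V → ℝ) (hp : ∀ m, 0 < p m) (hsum : ∑ m : V, p m = 1) :
    ∑ k : Fin K, ∑ m : V,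
        (p m * e m k / (∑ m' : V, p m' * e m' k) - p m) ^ 2 ≤
      (∑ l ∈ Finset.univ \ {n}, ((K : ℝ) - ⌊r l * K⌋) * p l ^ 2) +
        (∑ l ∈ Finset.univ \ {n}, ((K : ℝ) - ⌊r l * K⌋)) ^ 2 := by
  classical
  set S : Fin K → ℝ := fun k => ∑ m' : V, p m' * e m' k with hSdef
  have he0 : ∀ m k, 0 ≤ e m k := fun m k => by rcases he01 m k with h | h <;> simp [h]
  have he1 : ∀ m k, e m k ≤ 1 := fun m k => by rcases he01 m k with h | h <;> simp [h]
  have hSpos : ∀ k, 0 < S k := by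
    intro k
    have h1 : p n * e n k ≤ S k :=
      Finset.single_le_sum (f := fun m => p m * e m k)
        (fun m _ => mul_nonneg (hp m).le (he0 m k)) (Finset.mem_univ n)
    have := hp n
    rw [hen k] at h1; linarith
  have hSle : ∀ k, S k ≤ 1 := by
    intro k
    calc S k ≤ ∑ m : V, p m := by
          refine Finset.sum_le_sum (fun m _ => ?_)
          nlinarith [hp m, he1 m k, he0 m k]
      _ = 1 := hsum
  set lam : V → Fin K → ℝ := fun m k => p m * e m k / S k - p m with hlamdef
  -- pointwise decomposition
  have hdecomp : ∀ m k, (lam m k) ^ 2 = (1 - e m k) * p m ^ 2 + (e m k * lam m k) ^ 2 := by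
    intro m k
    rcases he01 m k with h | h
    · simp [hlamdef, h]
    · simp [hlamdef, h]
  -- e*lam nonneg
  have helam_nonneg : ∀ m k, 0 ≤ e m k * lam m k := by
    intro m k
    rcases he01 m k with h | h
    · simp [h]
    · have h1 := hSpos k
      have h2 := hSle k
      have h3 := (hp m).le
      simp only [hlamdef, h, mul_one, one_mul]
      rw [div_sub' (ne_of_gt h1)]
      apply div_nonneg _ h1.le
      nlinarith
  -- sum of e*lam over m equals 1 - S k
  have hsum_elam : ∀ k, ∑ m : V, e m k * lam m k = 1 - S k := by
    intro k
    have h1 : ∀ m, e m k * lam m k = p m * e m k / S k - p m * e m k := by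
      intro m
      rcases he01 m k with h | h <;> simp [hlamdef, h]
    rw [Finset.sum_congr rfl (fun m _ => h1 m), Finset.sum_sub_distrib]
    rw [← Finset.sum_div]
    rw [div_self (ne_of_gt (hSpos k))]
  -- the count of zeros is nonnegative and key sums
  have hfloor_le : ∀ m, (⌊r m * K⌋ : ℝ) ≤ K := by
    intro m
    have h1 : r m * K ≤ K := by nlinarith [(hr m).1, (hr m).2, Nat.cast_nonneg (α := ℝ) K]
    calc (⌊r m * K⌋ : ℝ) ≤ r m * K := Int.floor_le _
      _ ≤ K := h1
  have hpm_le : ∀ m, p m ≤ 1 := by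
    intro m
    rw [← hsum]
    exact Finset.single_le_sum (fun i _ => (hp i).le) (Finset.mem_univ m)
  have hen_sum : ∑ k : Fin K, e n k = (K : ℝ) := by
    simp [hen]
  -- main computation
  have hmain : ∑ k : Fin K, ∑ m : V, (lam m k) ^ 2 =
      (∑ l ∈ Finset.univ \ {n}, ((K : ℝ) - ⌊r l * K⌋) * p l ^ 2) +
        ∑ k : Fin K, ∑ m : V, (e m k * lam m k) ^ 2 := by
    have : ∀ k : Fin K, ∑ m : V, (lam m k) ^ 2 =
        (∑ m : V, (1 - e m k) * p m ^ 2) + ∑ m : V, (e m k * lam m k) ^ 2 := by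
      intro k
      rw [← Finset.sum_add_distrib]
      exact Finset.sum_congr rfl (fun m _ => hdecomp m k)
    rw [Finset.sum_congr rfl (fun k _ => this k)]
    rw [Finset.sum_add_distrib]
    congr 1
    rw [Finset.sum_comm]
    have hzero : ∑ k : Fin K, (1 - e n k) * p n ^ 2 = 0 := by simp [hen]
    rw [← Finset.sum_subset (Finset.sdiff_subset (s := (Finset.univ : Finset V)) (t := {n}))]
    · refine Finset.sum_congr rfl (fun m hm => ?_)
      have hmn : m ≠ n := by
        simp only [Finset.mem_sdiff, Finset.mem_singleton] at hm
        exact hm.2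
      rw [Finset.sum_congr rfl (fun k _ => by ring : ∀ k ∈ Finset.univ, (1 - e m k) * p m ^ 2 = p m ^2 - e m k * p m ^2)]
      rw [Finset.sum_sub_distrib, ← Finset.sum_mul, hcount m hmn]
      simp [Finset.card_univ]
      ring
    · intro x _ hx
      simp only [Finset.mem_sdiff, Finset.mem_univ, true_and, Finset.mem_singleton, not_not] at hx
      subst hx
      exact hzero
  -- bound the second piece
  have hbound2 : ∑ k : Fin K, ∑ m : V, (e m k * lam m k) ^ 2 ≤
      (∑ l ∈ Finset.univ \ {n}, ((K : ℝ) - ⌊r l * K⌋)) ^ 2 := by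
    have step1 : ∀ k : Fin K, ∑ m : V, (e m k * lam m k) ^ 2 ≤ (1 - S k) ^ 2 := by
      intro k
      calc ∑ m : V, (e m k * lam m k) ^ 2 ≤ (∑ m : V, e m k * lam m k) ^ 2 :=
            sq_sum_aux _ _ (fun m _ => helam_nonneg m k)
        _ = (1 - S k) ^ 2 := by rw [hsum_elam k]
    have step2 : ∑ k : Fin K, (1 - S k) ^ 2 ≤ (∑ k : Fin K, (1 - S k)) ^ 2 :=
      sq_sum_aux _ _ (fun k _ => by linarith [hSle k])
    have hsumS : ∑ k : Fin K, (1 - S k) = ∑ m ∈ Finset.univ \ {n}, p m * ((K : ℝ) - ⌊r m * K⌋) := by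
      have h1 : ∑ k : Fin K, (1 - S k) = ∑ m : V, p m * ((K : ℝ) - ∑ k : Fin K, e m k) := by
        have hk : ∀ k : Fin K, 1 - S k = ∑ m : V, (p m - p m * e m k) := by
          intro k
          simp only [hSdef]
          rw [Finset.sum_sub_distrib, hsum]
        rw [Finset.sum_congr rfl (fun k _ => hk k), Finset.sum_comm]
        refine Finset.sum_congr rfl (fun m _ => ?_)
        rw [Finset.sum_sub_distrib, ← Finset.mul_sum]
        simp only [Finset.sum_const, Finset.card_univ, Fintype.card_fin, nsmul_eq_mul, mul_one]
        ring
      rw [h1]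
      rw [← Finset.sum_subset (Finset.sdiff_subset (s := (Finset.univ : Finset V)) (t := {n}))]
      · refine Finset.sum_congr rfl (fun m hm => ?_)
        have hmn : m ≠ n := by
          simp only [Finset.mem_sdiff, Finset.mem_singleton] at hm
          exact hm.2
        rw [hcount m hmn]
      · intro x _ hx
        simp only [Finset.mem_sdiff, Finset.mem_univ, true_and, Finset.mem_singleton, not_not] at hx
        subst hx
        rw [hen_sum]; ring
    have hle : ∑ k : Fin K, (1 - S k) ≤ ∑ l ∈ Finset.univ \ {n}, ((K : ℝ) - ⌊r l * K⌋) := by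
      rw [hsumS]
      refine Finset.sum_le_sum (fun m _ => ?_)
      have := hfloor_le m
      nlinarith [hpm_le m, (hp m).le]
    have hnn : 0 ≤ ∑ k : Fin K, (1 - S k) :=
      Finset.sum_nonneg (fun k _ => by linarith [hSle k])
    calc ∑ k : Fin K, ∑ m : V, (e m k * lam m k) ^ 2
        ≤ ∑ k : Fin K, (1 - S k) ^ 2 := Finset.sum_le_sum (fun k _ => step1 k)
      _ ≤ (∑ k : Fin K, (1 - S k)) ^ 2 := step2
      _ ≤ (∑ l ∈ Finset.univ \ {n}, ((K : ℝ) - ⌊r l * K⌋)) ^ 2 := by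
          apply sq_le_sq' <;> nlinarith
  calc ∑ k : Fin K, ∑ m : V, (p m * e m k / (∑ m' : V, p m' * e m' k) - p m) ^ 2
      = ∑ k : Fin K, ∑ m : V, (lam m k) ^ 2 := rfl
    _ ≤ _ := by rw [hmain]; linarith
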